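/- arXiv:1503.02277 — 12 statements merged into one kernel-verified Lean document; each statement's English description precedes it below -/
import Mathlib

section
/- Let I be a set and 𝓕 a set of filters on I. A topological space X is 𝓕c-Frolík (i.e., X × Y is sequencewise 𝓕-compact for every sequencewise 𝓕-compact space Y) if and only if X is sequencewise (𝓕 ∩ 𝓖)-compact for every 𝓖 ∈ Spec_I(𝓕c), where 𝓕c is the class of sequencewise 𝓕-compact spaces. -/
universe u

open Filter Topology

/-- A space `X` is sequencewise `𝓕`-compact if every `I`-indexed sequence in `X`
`F`-converges (to some point) for some `F ∈ 𝓕`. -/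
def SeqFCompact {I : Type u} (𝓕 : Set (Filter I)) (X : Type u) [TopologicalSpace X] : Prop :=
  ∀ x : I → X, ∃ F ∈ 𝓕, ∃ p : X, Filter.Tendsto x F (𝓝 p)

/-- The spectrum of a sequence `y : I → Y`: the set of filters on `I` along which `y`
converges to some point of `Y`. -/
def spec {I : Type u} {Y : Type u} [TopologicalSpace Y] (y : I → Y) : Set (Filter I) :=
  {F | ∃ p : Y, Filter.Tendsto y F (𝓝 p)}

/-- The spectrum of a class `H` of topological spaces, relative to the index set `I`. -/
def specI (I : Type u) (H : ∀ Y : Type u, TopologicalSpace Y → Prop) : Set (Set (Filter I)) :=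
  {𝓖 | ∃ (Y : Type u) (tY : TopologicalSpace Y) (y : I → Y), H Y tY ∧ 𝓖 = @spec I Y tY y}

/-- A space `X` is `𝓕c`-Frolík iff it is sequencewise `𝓕 ∩ 𝓖`-compact for every
`𝓖 ∈ Spec_I(𝓕c)`, where `𝓕c` is the class of sequencewise `𝓕`-compact spaces. -/
theorem frolik_seqFCompact_iff {I : Type u} (𝓕 : Set (Filter I))
    (X : Type u) [TopologicalSpace X] :
    (∀ (Y : Type u) [TopologicalSpace Y], SeqFCompact 𝓕 Y → SeqFCompact 𝓕 (X × Y)) ↔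
      (∀ 𝓖 ∈ specI I (fun Y tY => @SeqFCompact I 𝓕 Y tY), SeqFCompact (𝓕 ∩ 𝓖) X) := by
  constructor
  · rintro h 𝓖 ⟨Y, tY, y, hY, rfl⟩ x
    obtain ⟨F, hF, ⟨p, q⟩, hpq⟩ := h Y hY (fun i => (x i, y i))
    rw [nhds_prod_eq] at hpq
    exact ⟨F, ⟨hF, q, tendsto_snd.comp hpq |>.congr (fun i => rfl)⟩,
      p, (tendsto_fst.comp hpq).congr (fun i => rfl)⟩
  · intro h Y _ hY z
    obtain ⟨F, ⟨hF, q, hq⟩, p, hp⟩ :=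
      h (spec (fun i => (z i).2)) ⟨Y, ‹_›, _, hY, rfl⟩ (fun i => (z i).1)
    exact ⟨F, hF, (p, q), hp.prodMk_nhds hq⟩
end

section
/- Let I be a set, 𝓕 a set of filters on I, and 𝓗 a class of topological spaces. A topological space X is 𝓕c-Frolík for 𝓗-spaces (i.e., X × Y is sequencewise 𝓕-compact for every Y ∈ 𝓗) if and only if X is sequencewise (𝓕 ∩ 𝓖)-compact for every 𝓖 ∈ Spec_I(𝓗). -/
universe u

open Filter Topology

/-- A space `X` is `𝓕c`-Frolík for `𝓗`-spaces iff it is sequencewise `𝓕 ∩ 𝓖`-compact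
for every `𝓖 ∈ Spec_I(𝓗)`. -/
theorem frolik_for_class_seqFCompact_iff {I : Type u} (𝓕 : Set (Filter I))
    (H : ∀ Y : Type u, TopologicalSpace Y → Prop) (X : Type u) [TopologicalSpace X] :
    (∀ (Y : Type u) (tY : TopologicalSpace Y), H Y tY → SeqFCompact 𝓕 (X × Y)) ↔
      (∀ 𝓖 ∈ specI I H, SeqFCompact (𝓕 ∩ 𝓖) X) := by
  constructor
  · rintro h 𝓖 ⟨Y, tY, y, hY, rfl⟩ x
    obtain ⟨F, hF, ⟨p, q⟩, hpq⟩ := h Y tY hY (fun i => (x i, y i))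
    rw [nhds_prod_eq, Filter.tendsto_prod_iff'] at hpq
    exact ⟨F, ⟨hF, q, hpq.2⟩, p, hpq.1⟩
  · rintro h Y tY hY z
    obtain ⟨F, ⟨hF, q, hq⟩, p, hp⟩ :=
      h (spec (fun i => (z i).2)) ⟨Y, tY, _, hY, rfl⟩ (fun i => (z i).1)
    exact ⟨F, hF, (p, q), hp.prodMk_nhds hq⟩
end

section
/- For every family 𝐅 = {𝓕_a : a ∈ A}, where each 𝓕_a is a family of filters over a set I_a, there exists a family 𝐐 = {𝓠_b : b ∈ B}, where each 𝓠_b is a family of filters over some set, such that the Frolík class 𝔉(𝐅c) equals 𝐐c, i.e., a topological space X satisfies X × Y ∈ 𝐅c for all Y ∈ 𝐅c if and only if X is 𝐐-compact. -/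
universe u

open Filter Topology

/-- For every family `𝐅 = {𝓕_a : a ∈ A}` of filter-families there is a family
`𝐐 = {𝓠_b : b ∈ B}` such that the Frolík class `𝔉(𝐅c)` equals `𝐐c`:
`X × Y` is `𝐅`-compact for every `𝐅`-compact `Y` iff `X` is `𝐐`-compact. -/
theorem exists_Q_frolik_FCompact {A : Type u} (I : A → Type u)
    (𝓕 : ∀ a : A, Set (Filter (I a))) :
    ∃ (B : Type u) (J : B → Type u) (𝓠 : ∀ b : B, Set (Filter (J b))),
      ∀ (X : Type u) [TopologicalSpace X],
        (∀ (Y : Type u) [TopologicalSpace Y],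
            (∀ a : A, SeqFCompact (𝓕 a) Y) → (∀ a : A, SeqFCompact (𝓕 a) (X × Y))) ↔
          (∀ b : B, SeqFCompact (𝓠 b) X) := by
  classical
  refine ⟨{p : Σ a : A, Set (Filter (I a)) //
      ∃ (Y : Type u) (_ : TopologicalSpace Y) (y : I p.1 → Y),
        (∀ a : A, SeqFCompact (𝓕 a) Y) ∧
          p.2 = {F | F ∈ 𝓕 p.1 ∧ ∃ q, Tendsto y F (𝓝 q)}},
    fun b => I b.1.1, fun b => b.1.2, fun X _ => ⟨?_, ?_⟩⟩
  · rintro h ⟨⟨a, S⟩, Y, tY, y, hY, hS⟩ x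
    obtain ⟨F, hF, ⟨p, q⟩, hpq⟩ := h Y hY a (fun i => (x i, y i))
    refine ⟨F, ?_, p, (continuous_fst.tendsto _).comp hpq⟩
    have hFm : F ∈ {F | F ∈ 𝓕 a ∧ ∃ q, Tendsto y F (𝓝 q)} :=
      ⟨hF, q, (continuous_snd.tendsto _).comp hpq⟩
    rw [← hS] at hFm
    exact hFm
  · rintro h Y tY hY a z
    set y : I a → Y := fun i => (z i).2 with hy
    obtain ⟨F, ⟨hF, q, hq⟩, p, hp⟩ :=
      h ⟨⟨a, {F | F ∈ 𝓕 a ∧ ∃ q, Tendsto y F (𝓝 q)}⟩, Y, tY, y, hY, rfl⟩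
        (fun i => (z i).1)
    exact ⟨F, hF, (p, q), hp.prodMk_nhds hq⟩
end

section
/- For every family 𝐅 = {𝓕_a : a ∈ A}, where each 𝓕_a is a family of filters over a set I_a, and every class 𝓗 of topological spaces, there exists a family 𝐐 = {𝓠_b : b ∈ B}, where each 𝓠_b is a family of filters over some set, such that (𝐅c : 𝓗) = 𝐐c, i.e., a topological space X satisfies X × Y ∈ 𝐅c for all Y ∈ 𝓗 if and only if X is 𝐐-compact. -/
universe u

open Filter Topology

/-- For every family `𝐅 = {𝓕_a : a ∈ A}` of filter-families and every class `𝓗` of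
topological spaces there is a family `𝐐 = {𝓠_b : b ∈ B}` such that `(𝐅c : 𝓗) = 𝐐c`:
`X × Y` is `𝐅`-compact for every `Y ∈ 𝓗` iff `X` is `𝐐`-compact. -/
theorem exists_Q_frolik_FCompact_for_class {A : Type u} (I : A → Type u)
    (𝓕 : ∀ a : A, Set (Filter (I a)))
    (H : ∀ Y : Type u, TopologicalSpace Y → Prop) :
    ∃ (B : Type u) (J : B → Type u) (𝓠 : ∀ b : B, Set (Filter (J b))),
      ∀ (X : Type u) [TopologicalSpace X],
        (∀ (Y : Type u) (tY : TopologicalSpace Y), H Y tY →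
            (∀ a : A, SeqFCompact (𝓕 a) (X × Y))) ↔
          (∀ b : B, SeqFCompact (𝓠 b) X) := by
  classical
  -- For `a : A`, a space `Y ∈ 𝓗` and a sequence `y : I a → Y`, the relevant family of
  -- filters on `I a` is `{F ∈ 𝓕 a | y F-converges}`.
  set Pred : ∀ a : A, Set (Filter (I a)) → Prop := fun a S =>
    ∃ (Y : Type u) (tY : TopologicalSpace Y), H Y tY ∧
      ∃ y : I a → Y, S = {F | F ∈ 𝓕 a ∧ ∃ q : Y, Filter.Tendsto y F (𝓝 q)} with hPred
  refine ⟨Σ a : A, {S : Set (Filter (I a)) // Pred a S}, fun b => I b.1, fun b => b.2.1,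
    fun X _ => ⟨?_, ?_⟩⟩
  · rintro h ⟨a, S, Y, tY, hY, y, rfl⟩ x
    obtain ⟨F, hF, ⟨p, q⟩, hpq⟩ := h Y tY hY a (fun i => (x i, y i))
    exact ⟨F, ⟨hF, q, (continuous_snd.tendsto _).comp hpq⟩, p,
      (continuous_fst.tendsto _).comp hpq⟩
  · intro h Y tY hY a z
    obtain ⟨F, ⟨hF, q, hq⟩, p, hp⟩ :=
      h ⟨a, ⟨{F | F ∈ 𝓕 a ∧ ∃ q : Y, Filter.Tendsto (fun i => (z i).2) F (𝓝 q)},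
        Y, tY, hY, fun i => (z i).2, rfl⟩⟩ (fun i => (z i).1)
    exact ⟨F, hF, (p, q), hp.prodMk_nhds hq⟩
end

section
/- For every class 𝓗 of topological spaces and every family 𝐅 = {𝓕_a : a ∈ A} of filter-families (each 𝓕_a a family of filters on a set I_a), one has (𝐅c : 𝓗) = 𝐐c, where 𝐐 = {𝓕_a ∩ 𝓖 : a ∈ A, 𝓖 ∈ Spec_{I_a}(𝓗)}. In particular every member of 𝐐 is contained in some member of 𝐅, and hence if every 𝓕_a consists of ultrafilters then every member of 𝐐 consists of ultrafilters. -/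
universe u

open Filter Topology

/-- `(𝐅c : 𝓗) = 𝐐c` where `𝐐 = {𝓕_a ∩ 𝓖 : a ∈ A, 𝓖 ∈ Spec_{I_a}(𝓗)}`; moreover every
member of `𝐐` is contained in some member of `𝐅`, and hence if every `𝓕_a` consists of
ultrafilters then every member of `𝐐` consists of ultrafilters. -/
theorem frolik_FCompact_eq_Qc {A : Type u} (I : A → Type u)
    (𝓕 : ∀ a : A, Set (Filter (I a)))
    (H : ∀ Y : Type u, TopologicalSpace Y → Prop) :
    (∀ (X : Type u) [TopologicalSpace X],
      (∀ (Y : Type u) (tY : TopologicalSpace Y), H Y tY →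
          (∀ a : A, SeqFCompact (𝓕 a) (X × Y))) ↔
        (∀ a : A, ∀ 𝓖 ∈ specI (I a) H, SeqFCompact (𝓕 a ∩ 𝓖) X)) ∧
    (∀ a : A, ∀ 𝓖 ∈ specI (I a) H, 𝓕 a ∩ 𝓖 ⊆ 𝓕 a) ∧
    ((∀ a : A, ∀ F ∈ 𝓕 a, ∃ U : Ultrafilter (I a), F = ↑U) →
      ∀ a : A, ∀ 𝓖 ∈ specI (I a) H, ∀ F ∈ 𝓕 a ∩ 𝓖, ∃ U : Ultrafilter (I a), F = ↑U) := by
  refine ⟨fun X _ => ⟨fun h a 𝓖 h𝓖 x => ?_, fun h Y tY hY a z => ?_⟩,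
    fun a 𝓖 _ => Set.inter_subset_left,
    fun hU a 𝓖 _ F hF => hU a F hF.1⟩
  · obtain ⟨Y, tY, y, hY, rfl⟩ := h𝓖
    obtain ⟨F, hF, ⟨p, q⟩, hpq⟩ := h Y tY hY a (fun i => (x i, y i))
    rw [nhds_prod_eq] at hpq
    exact ⟨F, ⟨hF, q, hpq.snd⟩, p, hpq.fst⟩
  · obtain ⟨F, ⟨hF1, q, hq⟩, p, hp⟩ :=
      h a (spec (fun i => (z i).2)) ⟨Y, tY, _, hY, rfl⟩ (fun i => (z i).1)
    exact ⟨F, hF1, (p, q), by rw [nhds_prod_eq]; exact hp.prodMk hq⟩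
end

section
/- There exists a family 𝐐 = {𝓠_b : b ∈ B}, where each 𝓠_b is a family of filters over some set, such that a topological space X is productively Lindelöf (i.e., X × Y is Lindelöf for every Lindelöf space Y) if and only if X is 𝐐-compact, i.e., X is sequencewise 𝓠_b-compact for every b ∈ B. Moreover 𝐐 can be chosen so that every 𝓠_b consists of ultrafilters. -/
universe u

open Filter Topology Set

/-- Key rectangle lemma. -/
lemma key_rect {Z X Y : Type*} [TopologicalSpace Z] [TopologicalSpace X] [TopologicalSpace Y]
    (x : Z → X)
    (H : ∀ (U : Ultrafilter Z) (p : X), Tendsto x (U : Filter Z) (𝓝 p) →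
      ∃ z, (U : Filter Z) ≤ 𝓝 z)
    {A : Type*} (G : A → Set Z) (Hs : A → Set Y)
    (hG : ∀ a, IsOpen (G a)) (p : X) (y : Y)
    (hcov : ∀ z : Z, ∃ a, z ∈ G a ∧ y ∈ Hs a) :
    ∃ (N : Set X) (T : Finset A), IsOpen N ∧ p ∈ N ∧ (∀ a ∈ T, y ∈ Hs a) ∧
      x ⁻¹' N ⊆ ⋃ a ∈ T, G a := by
  by_contra hcon
  push_neg at hcon
  -- hcon : ∀ N T, IsOpen N → p ∈ N → (∀ a ∈ T, y ∈ Hs a) → ¬ (x ⁻¹' N ⊆ ⋃ a ∈ T, G a)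
  classical
  set ι₀ := {NT : Set X × Finset A // IsOpen NT.1 ∧ p ∈ NT.1 ∧ ∀ a ∈ NT.2, y ∈ Hs a} with hι₀
  haveI hne : Nonempty ι₀ := ⟨⟨(Set.univ, ∅), isOpen_univ, mem_univ p, by simp⟩⟩
  set f : ι₀ → Filter Z := fun i => 𝓟 ((x ⁻¹' i.1.1) \ ⋃ a ∈ i.1.2, G a) with hf
  have hdir : Directed (· ≥ ·) f := by
    intro i j
    refine ⟨⟨(i.1.1 ∩ j.1.1, i.1.2 ∪ j.1.2), i.2.1.inter j.2.1, ⟨i.2.2.1, j.2.2.1⟩, ?_⟩, ?_, ?_⟩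
    · intro a ha
      rcases Finset.mem_union.1 ha with h | h
      · exact i.2.2.2 a h
      · exact j.2.2.2 a h
    · simp only [hf, le_principal_iff, mem_principal]
      intro z hz
      refine ⟨hz.1.1, fun h => hz.2 ?_⟩
      simp only [mem_iUnion, exists_prop] at h ⊢
      exact ⟨h.choose, Finset.mem_union_left _ h.choose_spec.1, h.choose_spec.2⟩
    · simp only [hf, le_principal_iff, mem_principal]
      intro z hz
      refine ⟨hz.1.2, fun h => hz.2 ?_⟩
      simp only [mem_iUnion, exists_prop] at h ⊢
      exact ⟨h.choose, Finset.mem_union_right _ h.choose_spec.1, h.choose_spec.2⟩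
  have hnb : ∀ i, NeBot (f i) := by
    intro i
    rw [hf]
    rw [principal_neBot_iff]
    have := hcon i.1.1 i.1.2 i.2.1 i.2.2.1 i.2.2.2
    rcases Set.not_subset.1 this with ⟨z, hz1, hz2⟩
    exact ⟨z, hz1, hz2⟩
  have hL : NeBot (⨅ i, f i) := iInf_neBot_of_directed' hdir hnb
  set U := Ultrafilter.of (⨅ i, f i) with hU
  have hUle : (U : Filter Z) ≤ ⨅ i, f i := Ultrafilter.of_le _
  have hmem : ∀ i : ι₀, (x ⁻¹' i.1.1) \ (⋃ a ∈ i.1.2, G a) ∈ U := by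
    intro i
    exact (hUle.trans (iInf_le f i)) (mem_principal_self _)
  have hten : Tendsto x (U : Filter Z) (𝓝 p) := by
    intro s hs
    rcases mem_nhds_iff.1 hs with ⟨N, hNs, hNo, hpN⟩
    have := hmem ⟨(N, ∅), hNo, hpN, by simp⟩
    simp only [Finset.notMem_empty, iUnion_of_empty, iUnion_empty, diff_empty] at this
    exact mem_of_superset this (fun z hz => hNs hz)
  obtain ⟨z, hz⟩ := H U p hten
  obtain ⟨a, hza, hya⟩ := hcov z
  have h1 : G a ∈ U := hz ((hG a).mem_nhds hza)
  have h2 : (x ⁻¹' Set.univ) \ (⋃ a' ∈ ({a} : Finset A), G a') ∈ U :=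
    hmem ⟨(Set.univ, {a}), isOpen_univ, mem_univ p, by simpa using hya⟩
  have : (G a ∩ ((x ⁻¹' Set.univ) \ (⋃ a' ∈ ({a} : Finset A), G a'))).Nonempty :=
    Filter.nonempty_of_mem (inter_mem h1 h2)
  rcases this with ⟨w, hw1, hw2⟩
  exact hw2.2 (by simpa using hw1)

/-- If every ultrafilter on `Z` along which `x` converges is convergent in `Z`,
and `X` is productively Lindelöf, then `Z` is productively Lindelöf. -/
lemma prodLind_of_map {Z X : Type u} [TopologicalSpace Z] [TopologicalSpace X]
    (x : Z → X)
    (H : ∀ (U : Ultrafilter Z) (p : X), Tendsto x (U : Filter Z) (𝓝 p) →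
      ∃ z, (U : Filter Z) ≤ 𝓝 z)
    (hX : ∀ (Y : Type u) [TopologicalSpace Y], LindelofSpace Y → LindelofSpace (X × Y)) :
    ∀ (Y : Type u) [TopologicalSpace Y], LindelofSpace Y → LindelofSpace (Z × Y) := by
  intro Y _ hY
  constructor
  rw [isLindelof_iff_countable_subcover]
  intro ι W hWo hsW
  classical
  set A := {GH : Set Z × Set Y // IsOpen GH.1 ∧ IsOpen GH.2 ∧ ∃ i, GH.1 ×ˢ GH.2 ⊆ W i} with hA
  set G : A → Set Z := fun a => a.1.1 with hG
  set Hs : A → Set Y := fun a => a.1.2 with hHs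
  have hcov : ∀ (z : Z) (y : Y), ∃ a : A, z ∈ G a ∧ y ∈ Hs a := by
    intro z y
    have : (z, y) ∈ ⋃ i, W i := hsW (mem_univ _)
    rcases mem_iUnion.1 this with ⟨i, hi⟩
    rcases isOpen_prod_iff.1 (hWo i) z y hi with ⟨u, v, hu, hv, hzu, hyv, huv⟩
    exact ⟨⟨(u, v), hu, hv, ⟨i, huv⟩⟩, hzu, hyv⟩
  -- for each (p, y) get a rectangle
  have key : ∀ c : X × Y, ∃ (N : Set X) (T : Finset A), IsOpen N ∧ c.1 ∈ N ∧
      (∀ a ∈ T, c.2 ∈ Hs a) ∧ x ⁻¹' N ⊆ ⋃ a ∈ T, G a :=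
    fun c => key_rect x H G Hs (fun a => a.2.1) c.1 c.2 (fun z => hcov z c.2)
  choose N T hNo hpN hyT hsub using key
  set R : X × Y → Set (X × Y) := fun c => N c ×ˢ ⋂ a ∈ T c, Hs a with hR
  have hRo : ∀ c, IsOpen (R c) :=
    fun c => (hNo c).prod (isOpen_biInter_finset (fun a _ => a.2.2.1))
  have hRc : (Set.univ : Set (X × Y)) ⊆ ⋃ c, R c := by
    intro c _
    exact mem_iUnion.2 ⟨c, hpN c, mem_iInter₂.2 (hyT c)⟩
  have hXY : LindelofSpace (X × Y) := hX Y hY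
  obtain ⟨t, htc, hts⟩ := hXY.isLindelof_univ.elim_countable_subcover R hRo hRc
  have hix : ∀ a : A, ∃ i, G a ×ˢ Hs a ⊆ W i := fun a => a.2.2.2
  choose ix hixs using hix
  refine ⟨⋃ c ∈ t, (ix '' (T c : Set A)), htc.biUnion (fun c _ => (((T c).finite_toSet).image ix).countable), ?_⟩
  rintro ⟨z, y⟩ -
  have : (x z, y) ∈ ⋃ c ∈ t, R c := hts (mem_univ _)
  rcases mem_iUnion₂.1 this with ⟨c, hct, hczy⟩
  have hxz : x z ∈ N c := hczy.1
  have hy : y ∈ ⋂ a ∈ T c, Hs a := hczy.2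
  rcases mem_iUnion₂.1 (hsub c hxz) with ⟨a, haT, hza⟩
  have hya : y ∈ Hs a := mem_iInter₂.1 hy a haT
  refine mem_iUnion₂.2 ⟨ix a, ?_, hixs a ⟨hza, hya⟩⟩
  exact mem_iUnion₂.2 ⟨c, hct, Set.mem_image_of_mem ix haT⟩

/-- Productively Lindelöf. -/
def PL (Z : Type u) [TopologicalSpace Z] : Prop :=
  ∀ (Y : Type u) [TopologicalSpace Y], LindelofSpace Y → LindelofSpace (Z × Y)

/-- There is a family `𝐐 = {𝓠_b : b ∈ B}` of families of ultrafilters such that a space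
`X` is productively Lindelöf iff `X` is `𝐐`-compact. -/
theorem exists_Q_productively_lindelof :
    ∃ (B : Type (u + 1)) (J : B → Type u) (𝓠 : ∀ b : B, Set (Filter (J b))),
      (∀ b : B, ∀ F ∈ 𝓠 b, ∃ U : Ultrafilter (J b), F = ↑U) ∧
      ∀ (X : Type u) [TopologicalSpace X],
        (∀ (Y : Type u) [TopologicalSpace Y], LindelofSpace Y → LindelofSpace (X × Y)) ↔
          (∀ b : B, SeqFCompact (𝓠 b) X) := by
  refine ⟨Σ Z : Type u, {τ : TopologicalSpace Z // ¬ @PL Z τ}, fun b => b.1,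
    fun b => {F | ∃ U : Ultrafilter b.1, F = ↑U ∧
      ∀ z : b.1, ¬ (U : Filter b.1) ≤ @nhds b.1 b.2.1 z}, ?_, ?_⟩
  · rintro b F ⟨U, hFU, -⟩
    exact ⟨U, hFU⟩
  · intro X instX
    constructor
    · intro hX b xseq
      letI : TopologicalSpace b.1 := b.2.1
      by_contra hcon
      push_neg at hcon
      refine b.2.2 ?_
      refine prodLind_of_map xseq ?_ hX
      intro U p hU
      by_contra hz
      push_neg at hz
      exact hcon (↑U) ⟨U, rfl, hz⟩ p hU
    · intro h
      by_contra hX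
      obtain ⟨F, hF, p, hT⟩ := h ⟨X, instX, hX⟩ id
      obtain ⟨U, rfl, hnc⟩ := hF
      refine hnc p ?_
      rwa [show Tendsto id (U : Filter X) (𝓝 p) ↔ (U : Filter X) ≤ 𝓝 p from by
        rw [Tendsto, Filter.map_id]] at hT
end

section
/- There exists a family 𝐐 = {𝓠_b : b ∈ B}, where each 𝓠_b is a family of filters over some set, such that a topological space X is productively linearly Lindelöf (i.e., X × Y is linearly Lindelöf for every linearly Lindelöf space Y) if and only if X is 𝐐-compact, i.e., X is sequencewise 𝓠_b-compact for every b ∈ B. Moreover 𝐐 can be chosen so that every 𝓠_b consists of ultrafilters. -/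
universe u

open Filter Topology

/-- `X` is `[λ, λ]`-compact: every open cover of `X` by at most `λ` sets has a subcover
by fewer than `λ` sets. -/
def LamCompact (lam : Cardinal.{u}) (X : Type u) [TopologicalSpace X] : Prop :=
  ∀ S : Set (Set X), (∀ s ∈ S, IsOpen s) → ⋃₀ S = Set.univ → Cardinal.mk S ≤ lam →
    ∃ T ⊆ S, Cardinal.mk T < lam ∧ ⋃₀ T = Set.univ

/-- `X` is linearly Lindelöf: `[λ, λ]`-compact for every regular uncountable cardinal. -/
def LinearlyLindelof (X : Type u) [TopologicalSpace X] : Prop :=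
  ∀ lam : Cardinal.{u}, lam.IsRegular → Cardinal.aleph0 < lam → LamCompact lam X

namespace ProdLLAux

open Cardinal Ordinal Set

variable {lam : Cardinal.{u}}

lemma mk_kappa (lam : Cardinal.{u}) : #lam.ord.ToType = lam := by
  rw [Cardinal.mk_toType, Cardinal.card_ord]

lemma bounded_of_small (hreg : lam.IsRegular) {A : Set lam.ord.ToType} (hA : #A < lam) :
    ∃ b, ∀ a ∈ A, a < b := by
  have h' : #A < (@Ordinal.type lam.ord.ToType (· < ·) isWellOrder_lt).cof := by
    rwa [Ordinal.type_toType, hreg.cof_eq]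
  have h'' : #A < Order.cof lam.ord.ToType := by rwa [Ordinal.cof_toType, hreg.cof_eq]
  exact not_isCofinal_iff.1 (fun hc => absurd (Order.cof_le hc) (not_le.2 h''))

lemma mk_Iio_lt (hreg : lam.IsRegular) (b : lam.ord.ToType) : #(Set.Iio b) < lam := by
  haveI : IsWellOrder lam.ord.ToType (Quotient.out lam.ord).2 := (Quotient.out lam.ord).wo
  have h1 : #(Set.Iio b) = (@Ordinal.typein lam.ord.ToType (· < ·) isWellOrder_lt b).card :=
    (Ordinal.card_typein b).symm
  rw [h1]
  exact Cardinal.lt_ord.mp (Ordinal.typein_lt_self b)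

lemma exists_gt_of_mk_eq (hreg : lam.IsRegular) {A : Set lam.ord.ToType}
    (hA : #A = lam) (γ : lam.ord.ToType) : ∃ β ∈ A, γ < β := by
  by_contra h
  push_neg at h
  have hsub : A ⊆ insert γ (Set.Iio γ) := by
    intro a ha
    rcases lt_or_eq_of_le (h a ha) with h' | h'
    · exact Set.mem_insert_of_mem _ h'
    · exact h' ▸ Set.mem_insert _ _
  have h2 : #A ≤ #(Set.Iio γ) + 1 :=
    le_trans (Cardinal.mk_le_mk_of_subset hsub) (Cardinal.mk_insert_le)
  have h3 : #(Set.Iio γ) + 1 < lam :=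
    Cardinal.add_lt_of_lt hreg.aleph0_le (mk_Iio_lt hreg γ)
      (lt_of_lt_of_le Cardinal.one_lt_aleph0 hreg.aleph0_le)
  exact lt_irrefl lam (lt_of_le_of_lt (hA.symm.trans_le h2) h3)

/-- [λ,λ]-compactness gives a uniform ultrafilter limit for every λ-sequence. -/
lemma exists_uniform_limit {W : Type u} [TopologicalSpace W] (hreg : lam.IsRegular)
    (hunc : Cardinal.aleph0 < lam) (hW : LamCompact lam W) (w : lam.ord.ToType → W) :
    ∃ D : Ultrafilter lam.ord.ToType, (∀ A ∈ D, #A = lam) ∧ ∃ p, Tendsto w ↑D (𝓝 p) := by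
  have hne : Nonempty lam.ord.ToType := by
    rw [Ordinal.toType_nonempty_iff_ne_zero]
    exact hreg.ord_pos.ne'
  -- find a point in all tail closures
  have hp : ∃ p : W, ∀ β, p ∈ closure (w '' Set.Ici β) := by
    by_contra hcon
    push_neg at hcon
    set S : Set (Set W) := Set.range (fun β => (closure (w '' Set.Ici β))ᶜ) with hS
    have hopen : ∀ s ∈ S, IsOpen s := by
      rintro s ⟨β, rfl⟩
      exact isClosed_closure.isOpen_compl
    have hcov : ⋃₀ S = Set.univ := by
      apply Set.eq_univ_of_forall
      intro p
      obtain ⟨β, hβ⟩ := hcon p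
      exact ⟨_, ⟨β, rfl⟩, hβ⟩
    have hcard : #S ≤ lam := le_trans Cardinal.mk_range_le (le_of_eq (mk_kappa lam))
    obtain ⟨T, hTS, hTcard, hTcov⟩ := hW S hopen hcov hcard
    -- choose indices
    have hch : ∀ t : T, ∃ β, (t : Set W) = (closure (w '' Set.Ici β))ᶜ := by
      rintro ⟨t, ht⟩
      obtain ⟨β, hβ⟩ := hTS ht
      exact ⟨β, hβ.symm⟩
    choose f hf using hch
    have hrange : #(Set.range f) < lam := lt_of_le_of_lt Cardinal.mk_range_le hTcard
    obtain ⟨γ, hγ⟩ := bounded_of_small hreg hrange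
    have hmem : w γ ∈ ⋃₀ T := hTcov ▸ Set.mem_univ _
    obtain ⟨t, ht, hwt⟩ := hmem
    have h1 : w γ ∈ closure (w '' Set.Ici (f ⟨t, ht⟩)) :=
      subset_closure ⟨γ, le_of_lt (hγ _ ⟨⟨t, ht⟩, rfl⟩), rfl⟩
    have ht2 : t = (closure (w '' Set.Ici (f ⟨t, ht⟩)))ᶜ := hf ⟨t, ht⟩
    rw [ht2] at hwt
    exact hwt h1
  obtain ⟨p, hp⟩ := hp
  -- the filter
  set F : Filter lam.ord.ToType := Filter.comap w (𝓝 p) ⊓ Filter.atTop with hF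
  have hFne : F.NeBot := by
    rw [hF, Filter.inf_neBot_iff]
    intro s hs t ht
    obtain ⟨U, hU, hUs⟩ := hs
    obtain ⟨b, hb⟩ := Filter.mem_atTop_sets.mp ht
    have := (mem_closure_iff_nhds.mp (hp b)) U hU
    obtain ⟨q, hqU, α, hα, rfl⟩ := this
    exact ⟨α, hUs hqU, hb α hα⟩
  set D : Ultrafilter lam.ord.ToType := Ultrafilter.of F with hD
  have hDF : ↑D ≤ F := Ultrafilter.of_le F
  refine ⟨D, ?_, p, ?_⟩
  · intro A hA
    refine le_antisymm (le_trans (Cardinal.mk_set_le A) (le_of_eq (mk_kappa lam))) ?_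
    by_contra h
    push_neg at h
    obtain ⟨b, hb⟩ := bounded_of_small hreg h
    have hIci : Set.Ici b ∈ (D : Filter lam.ord.ToType) :=
      (hDF.trans inf_le_right) (Filter.Ici_mem_atTop b)
    have : (A ∩ Set.Ici b).Nonempty := Filter.nonempty_of_mem (Filter.inter_mem hA hIci)
    obtain ⟨a, haA, hab⟩ := this
    exact absurd (hb a haA) (not_lt_of_ge hab)
  · exact Filter.tendsto_iff_comap.mpr (le_trans hDF inf_le_left)

/-- Failure of [λ,λ]-compactness gives a λ-sequence with no uniform ultrafilter limit. -/
lemma exists_bad_seq {W : Type u} [TopologicalSpace W] (hreg : lam.IsRegular)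
    (hunc : Cardinal.aleph0 < lam) (hW : ¬ LamCompact lam W) :
    ∃ w : lam.ord.ToType → W, ∀ D : Ultrafilter lam.ord.ToType,
      (∀ A ∈ D, #A = lam) → ∀ p, ¬ Tendsto w ↑D (𝓝 p) := by
  rw [LamCompact] at hW
  push_neg at hW
  obtain ⟨S, hopen, hcov, hcard, hno⟩ := hW
  -- S is nonempty
  have hWne : Nonempty W := by
    by_contra h
    rw [not_nonempty_iff] at h
    have h0 : (∅ : Set (Set W)) ⊆ S := Set.empty_subset S
    have h1 : #(∅ : Set (Set W)) < lam := by
      simp only [Cardinal.mk_eq_zero]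
      exact hreg.pos
    have h2 : ⋃₀ (∅ : Set (Set W)) = Set.univ := by
      rw [Set.sUnion_empty]
      exact (Set.univ_eq_empty_iff.mpr h).symm
    exact hno ∅ h0 h1 h2
  obtain ⟨pt⟩ := hWne
  have hSne : Nonempty S := by
    have : pt ∈ ⋃₀ S := hcov ▸ Set.mem_univ pt
    obtain ⟨s, hs, _⟩ := this
    exact ⟨⟨s, hs⟩⟩
  -- surjection from κ onto S
  have hle : #S ≤ #lam.ord.ToType := hcard.trans (le_of_eq (mk_kappa lam).symm)
  obtain ⟨f⟩ := Cardinal.le_def _ _ |>.mp hle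
  set g : lam.ord.ToType → S := Function.invFun f with hg
  have hgsurj : Function.Surjective g := Function.invFun_surjective f.injective
  -- choose the sequence
  have key : ∀ β : lam.ord.ToType, ∃ x : W, ∀ α, α < β → x ∉ (g α : Set W) := by
    intro β
    set T : Set (Set W) := Subtype.val '' (g '' Set.Iio β) with hT
    have hTS : T ⊆ S := by
      rintro t ⟨⟨t', ht'⟩, _, rfl⟩
      exact ht'
    have hTcard : #T < lam :=
      lt_of_le_of_lt (le_trans Cardinal.mk_image_le Cardinal.mk_image_le) (mk_Iio_lt hreg β)
    have := hno T hTS hTcard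
    obtain ⟨x, hx⟩ := (Set.ne_univ_iff_exists_notMem _).mp this
    refine ⟨x, fun α hα hmem => hx ?_⟩
    exact ⟨(g α : Set W), ⟨g α, ⟨α, hα, rfl⟩, rfl⟩, hmem⟩
  choose w hw using key
  refine ⟨w, fun D hDu p hten => ?_⟩
  have hpmem : p ∈ ⋃₀ S := hcov ▸ Set.mem_univ p
  obtain ⟨s, hs, hps⟩ := hpmem
  obtain ⟨γ, hγ⟩ := hgsurj ⟨s, hs⟩
  have hA : w ⁻¹' s ∈ (D : Filter lam.ord.ToType) :=
    hten ((hopen s hs).mem_nhds hps)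
  obtain ⟨β, hβA, hγβ⟩ := exists_gt_of_mk_eq hreg (hDu _ hA) γ
  have : w β ∉ (g γ : Set W) := hw β γ hγβ
  rw [hγ] at this
  exact this hβA

/-- Soundness predicate for a pair (index type, filter family). -/
def Sound (q : Σ J : Type u, Set (Filter J)) : Prop :=
  (∀ F ∈ q.2, ∃ U : Ultrafilter q.1, F = ↑U) ∧
  ∀ (Z : Type u) [TopologicalSpace Z],
    (∀ (Y : Type u) [TopologicalSpace Y], LinearlyLindelof Y → LinearlyLindelof (Z × Y)) →
    SeqFCompact q.2 Z

end ProdLLAux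

open ProdLLAux in
/-- There is a family `𝐐 = {𝓠_b : b ∈ B}` of families of ultrafilters such that a space
`X` is productively linearly Lindelöf iff `X` is `𝐐`-compact. -/
theorem exists_Q_productively_linearlyLindelof :
    ∃ (B : Type (u + 1)) (J : B → Type u) (𝓠 : ∀ b : B, Set (Filter (J b))),
      (∀ b : B, ∀ F ∈ 𝓠 b, ∃ U : Ultrafilter (J b), F = ↑U) ∧
      ∀ (X : Type u) [TopologicalSpace X],
        (∀ (Y : Type u) [TopologicalSpace Y],
            LinearlyLindelof Y → LinearlyLindelof (X × Y)) ↔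
          (∀ b : B, SeqFCompact (𝓠 b) X) := by
  classical
  refine ⟨{q : Σ J : Type u, Set (Filter J) // Sound q}, fun b => b.1.1, fun b => b.1.2,
    fun b => b.2.1, ?_⟩
  intro X _
  constructor
  · intro h b
    exact b.2.2 X h
  · intro hQ Y _ hY lam hreg hunc
    by_contra hbad
    obtain ⟨w, hw⟩ := exists_bad_seq hreg hunc hbad
    set y : lam.ord.ToType → Y := fun α => (w α).2 with hy
    set Q : Set (Filter lam.ord.ToType) :=
      {F | ∃ D : Ultrafilter lam.ord.ToType,
        F = ↑D ∧ (∀ A ∈ D, Cardinal.mk A = lam) ∧ ∃ q, Filter.Tendsto y ↑D (𝓝 q)} with hQdef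
    have hsound : ProdLLAux.Sound ⟨lam.ord.ToType, Q⟩ := by
      constructor
      · rintro F ⟨D, rfl, _, _⟩
        exact ⟨D, rfl⟩
      · intro Z _ hZ z
        have hZY : LinearlyLindelof (Z × Y) := hZ Y hY
        obtain ⟨D, hDu, pq, hpq⟩ :=
          exists_uniform_limit hreg hunc (hZY lam hreg hunc) (fun α => (z α, y α))
        refine ⟨↑D, ⟨D, rfl, hDu, pq.2, ?_⟩, pq.1, ?_⟩
        · exact (continuous_snd.tendsto pq).comp hpq
        · exact (continuous_fst.tendsto pq).comp hpq
    obtain ⟨F, hF, p, hp⟩ := hQ ⟨⟨lam.ord.ToType, Q⟩, hsound⟩ (fun α => (w α).1)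
    obtain ⟨D, rfl, hDu, q, hq⟩ := hF
    have hten : Filter.Tendsto w ↑D (𝓝 (p, q)) := by
      have := hp.prodMk_nhds hq
      simpa using this
    exact hw D hDu (p, q) hten
end

section
/- A topological space X is Lindelöf if and only if X is [λ, λ]-compact for every uncountable cardinal λ, i.e., if and only if for every uncountable cardinal λ, every open cover of X by at most λ sets has a subcover by fewer than λ sets. -/
universe u

lemma lamCompact_aux {X : Type u} [TopologicalSpace X]
    (h : ∀ lam : Cardinal.{u}, Cardinal.aleph0 < lam → LamCompact lam X)
    (κ : Cardinal.{u}) :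
    ∀ S : Set (Set X), (∀ s ∈ S, IsOpen s) → ⋃₀ S = Set.univ → Cardinal.mk S ≤ κ →
      ∃ T ⊆ S, T.Countable ∧ ⋃₀ T = Set.univ := by
  induction κ using Cardinal.lt_wf.induction with
  | _ κ IH =>
    intro S hSo hScov hSκ
    by_cases hc : Cardinal.mk S ≤ Cardinal.aleph0
    · exact ⟨S, subset_refl S, Set.countable_coe_iff.mp (Cardinal.mk_le_aleph0_iff.mp hc), hScov⟩
    · push_neg at hc
      obtain ⟨T, hTS, hTlt, hTcov⟩ :=
        h (Cardinal.mk S) hc S hSo hScov le_rfl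
      obtain ⟨T', hT'T, hT'c, hT'cov⟩ :=
        IH (Cardinal.mk T) (lt_of_lt_of_le hTlt hSκ) T
          (fun s hs => hSo s (hTS hs)) hTcov le_rfl
      exact ⟨T', hT'T.trans hTS, hT'c, hT'cov⟩

/-- A space is Lindelöf iff it is `[λ, λ]`-compact for every uncountable cardinal `λ`. -/
theorem lindelof_iff_lamCompact (X : Type u) [TopologicalSpace X] :
    LindelofSpace X ↔
      ∀ lam : Cardinal.{u}, Cardinal.aleph0 < lam → LamCompact lam X := by
  constructor
  · intro hL lam hlam S hSo hScov hSle
    obtain ⟨T, hTS, hTc, hTcov⟩ := IsLindelof.elim_countable_subcover_image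
      (isLindelof_univ (X := X)) (c := id) hSo
      (by simp only [id_eq, ← Set.sUnion_eq_biUnion, hScov]; exact subset_refl _)
    refine ⟨T, hTS, lt_of_le_of_lt (Cardinal.mk_le_aleph0_iff.mpr
      (Set.countable_coe_iff.mpr hTc)) hlam, ?_⟩
    apply Set.eq_univ_of_univ_subset
    simpa only [id_eq, ← Set.sUnion_eq_biUnion] using hTcov
  · intro h
    constructor
    apply isLindelof_of_countable_subcover
    intro ι U hUo hsU
    obtain ⟨T, hTS, hTc, hTcov⟩ := lamCompact_aux h (Cardinal.mk (Set.range U))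
      (Set.range U) (by rintro s ⟨i, rfl⟩; exact hUo i)
      (by
        apply Set.eq_univ_of_univ_subset
        rwa [Set.sUnion_range])
      le_rfl
    choose f hf using fun s : T => hTS s.2
    have : Countable T := hTc.to_subtype
    refine ⟨Set.range f, Set.countable_range f, fun x _ => ?_⟩
    have hx : x ∈ ⋃₀ T := hTcov ▸ Set.mem_univ x
    obtain ⟨s, hsT, hxs⟩ := hx
    exact Set.mem_biUnion ⟨⟨s, hsT⟩, rfl⟩ (by rw [hf ⟨s, hsT⟩]; exact hxs)
end

section
/- Let I be a set, 𝓕 a set of filters on I, and 𝓗 a class of topological spaces. A topological space X is 𝓕p-Frolík for 𝓗-spaces (i.e., X × Y is sequencewise 𝓕-pseudocompact for every Y ∈ 𝓗) if and only if X is sequencewise (𝓕 ∩ 𝓖)-pseudocompact for every 𝓖 ∈ PSpec_I(𝓗). -/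
universe u

open Filter Topology

/-- `p` is an `F`-limit point of the sequence of sets `O : I → Set X`. -/
def FLimitPt {I : Type u} {X : Type u} [TopologicalSpace X] (F : Filter I)
    (O : I → Set X) (p : X) : Prop :=
  ∀ U ∈ 𝓝 p, {i : I | (O i ∩ U).Nonempty} ∈ F

/-- A space `X` is sequencewise `𝓕`-pseudocompact if every `I`-indexed sequence of
nonempty open subsets of `X` has an `F`-limit point for some `F ∈ 𝓕`. -/
def SeqFPseudocompact {I : Type u} (𝓕 : Set (Filter I)) (X : Type u)
    [TopologicalSpace X] : Prop :=
  ∀ O : I → Set X, (∀ i, IsOpen (O i)) → (∀ i, (O i).Nonempty) →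
    ∃ F ∈ 𝓕, ∃ p : X, FLimitPt F O p

/-- The pseudospectrum of a sequence of sets `O : I → Set Y`. -/
def pspec {I : Type u} {Y : Type u} [TopologicalSpace Y] (O : I → Set Y) : Set (Filter I) :=
  {F | ∃ p : Y, FLimitPt F O p}

/-- The pseudospectrum of a class `H` of topological spaces, relative to `I`. -/
def pspecI (I : Type u) (H : ∀ Y : Type u, TopologicalSpace Y → Prop) :
    Set (Set (Filter I)) :=
  {𝓖 | ∃ (Y : Type u) (tY : TopologicalSpace Y) (O : I → Set Y),
    H Y tY ∧ (∀ i, @IsOpen Y tY (O i)) ∧ (∀ i, (O i).Nonempty) ∧ 𝓖 = @pspec I Y tY O}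

/-- A space `X` is `𝓕p`-Frolík for `𝓗`-spaces iff it is sequencewise
`𝓕 ∩ 𝓖`-pseudocompact for every `𝓖 ∈ PSpec_I(𝓗)`. -/
theorem frolik_for_class_seqFPseudocompact_iff {I : Type u} (𝓕 : Set (Filter I))
    (H : ∀ Y : Type u, TopologicalSpace Y → Prop) (X : Type u) [TopologicalSpace X] :
    (∀ (Y : Type u) (tY : TopologicalSpace Y), H Y tY → SeqFPseudocompact 𝓕 (X × Y)) ↔
      (∀ 𝓖 ∈ pspecI I H, SeqFPseudocompact (𝓕 ∩ 𝓖) X) := by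
  constructor
  · intro h 𝓖 h𝓖 U hUo hUne
    obtain ⟨Y, tY, O, hH, hOo, hOne, rfl⟩ := h𝓖
    obtain ⟨F, hF, ⟨p, q⟩, hpq⟩ := h Y tY hH (fun i => U i ×ˢ O i)
      (fun i => (hUo i).prod (hOo i)) (fun i => (hUne i).prod (hOne i))
    refine ⟨F, ⟨hF, ⟨q, ?_⟩⟩, p, ?_⟩
    · intro W hW
      refine F.mem_of_superset (hpq (Set.univ ×ˢ W) (prod_mem_nhds Filter.univ_mem hW)) ?_
      rintro i ⟨⟨x, y⟩, ⟨⟨hx, hy⟩, _, hyW⟩⟩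
      exact ⟨y, hy, hyW⟩
    · intro W hW
      refine F.mem_of_superset (hpq (W ×ˢ Set.univ) (prod_mem_nhds hW Filter.univ_mem)) ?_
      rintro i ⟨⟨x, y⟩, ⟨⟨hx, hy⟩, hxW, _⟩⟩
      exact ⟨x, hx, hxW⟩
  · intro h Y tY hH O hOo hOne
    have hrect : ∀ i, ∃ (u : Set X) (v : Set Y), IsOpen u ∧ IsOpen v ∧ u.Nonempty ∧
        v.Nonempty ∧ u ×ˢ v ⊆ O i := by
      intro i
      obtain ⟨⟨x, y⟩, hxy⟩ := hOne i
      have hmem : O i ∈ 𝓝 (x, y) := (hOo i).mem_nhds hxy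
      rw [mem_nhds_prod_iff] at hmem
      obtain ⟨u, hu, v, hv, huv⟩ := hmem
      exact ⟨interior u, interior v, isOpen_interior, isOpen_interior,
        ⟨x, mem_interior_iff_mem_nhds.2 hu⟩, ⟨y, mem_interior_iff_mem_nhds.2 hv⟩,
        (Set.prod_mono interior_subset interior_subset).trans huv⟩
    choose U V hUo hVo hUne hVne hsub using hrect
    obtain ⟨F, ⟨hF𝓕, q, hq⟩, p, hp⟩ := h (pspec V) ⟨Y, tY, V, hH, hVo, hVne, rfl⟩ U hUo hUne
    refine ⟨F, hF𝓕, (p, q), ?_⟩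
    intro W hW
    rw [mem_nhds_prod_iff] at hW
    obtain ⟨A, hA, B, hB, hAB⟩ := hW
    filter_upwards [hp A hA, hq B hB] with i h1 h2
    obtain ⟨x, hxU, hxA⟩ := h1
    obtain ⟨y, hyV, hyB⟩ := h2
    exact ⟨(x, y), hsub i ⟨hxU, hyV⟩, hAB ⟨hxA, hyB⟩⟩
end

section
/- For every class 𝓗 of topological spaces and every family 𝐅 = {𝓕_a : a ∈ A} of filter-families (each 𝓕_a a family of filters on a set I_a), one has (𝐅p : 𝓗) = 𝐐p, where 𝐐 = {𝓕_a ∩ 𝓖 : a ∈ A, 𝓖 ∈ PSpec_{I_a}(𝓗)}; that is, a topological space X satisfies X × Y is 𝐅-pseudocompact for every Y ∈ 𝓗 if and only if X is 𝐐-pseudocompact. -/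
universe u

open Filter Topology

lemma flimit_mono {I X : Type u} [TopologicalSpace X] {F : Filter I} {O O' : I → Set X}
    (h : ∀ i, O i ⊆ O' i) {p : X} (hp : FLimitPt F O p) : FLimitPt F O' p := by
  intro U hU
  exact F.sets_of_superset (hp U hU) fun i hi =>
    hi.mono (Set.inter_subset_inter_left U (h i))

lemma flimit_prod {I X Y : Type u} [TopologicalSpace X] [TopologicalSpace Y]
    {F : Filter I} {V : I → Set X} {W : I → Set Y} {p : X} {q : Y} :
    FLimitPt F (fun i => V i ×ˢ W i) (p, q) ↔ FLimitPt F V p ∧ FLimitPt F W q := by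
  constructor
  · intro h
    constructor
    · intro U hU
      have h2 : (U ×ˢ (Set.univ : Set Y)) ∈ 𝓝 (p, q) := by
        rw [nhds_prod_eq]
        exact prod_mem_prod hU Filter.univ_mem
      refine F.sets_of_superset (h _ h2) fun i hi => ?_
      obtain ⟨⟨x, y⟩, hxy⟩ := hi
      exact ⟨x, hxy.1.1, hxy.2.1⟩
    · intro U hU
      have h2 : ((Set.univ : Set X) ×ˢ U) ∈ 𝓝 (p, q) := by
        rw [nhds_prod_eq]
        exact prod_mem_prod Filter.univ_mem hU
      refine F.sets_of_superset (h _ h2) fun i hi => ?_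
      obtain ⟨⟨x, y⟩, hxy⟩ := hi
      exact ⟨y, hxy.1.2, hxy.2.2⟩
  · rintro ⟨h1, h2⟩ U hU
    rw [mem_nhds_prod_iff] at hU
    obtain ⟨U1, hU1, U2, hU2, hsub⟩ := hU
    refine F.sets_of_superset (F.inter_sets (h1 U1 hU1) (h2 U2 hU2)) ?_
    rintro i ⟨⟨x, hx⟩, ⟨y, hy⟩⟩
    exact ⟨(x, y), ⟨hx.1, hy.1⟩, hsub ⟨hx.2, hy.2⟩⟩

/-- `(𝐅p : 𝓗) = 𝐐p` where `𝐐 = {𝓕_a ∩ 𝓖 : a ∈ A, 𝓖 ∈ PSpec_{I_a}(𝓗)}`: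
`X × Y` is `𝐅`-pseudocompact for every `Y ∈ 𝓗` iff `X` is `𝐐`-pseudocompact. -/
theorem frolik_FPseudocompact_eq_Qp {A : Type u} (I : A → Type u)
    (𝓕 : ∀ a : A, Set (Filter (I a)))
    (H : ∀ Y : Type u, TopologicalSpace Y → Prop)
    (X : Type u) [TopologicalSpace X] :
    (∀ (Y : Type u) (tY : TopologicalSpace Y), H Y tY →
        (∀ a : A, SeqFPseudocompact (𝓕 a) (X × Y))) ↔
      (∀ a : A, ∀ 𝓖 ∈ pspecI (I a) H, SeqFPseudocompact (𝓕 a ∩ 𝓖) X) := by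
  constructor
  · rintro h a 𝓖 ⟨Y, tY, O', hHY, hO'open, hO'ne, rfl⟩ O hOopen hOne
    obtain ⟨F, hF, ⟨p, q⟩, hpq⟩ :=
      h Y tY hHY a (fun i => O i ×ˢ O' i)
        (fun i => (hOopen i).prod (hO'open i))
        (fun i => (hOne i).prod (hO'ne i))
    rw [flimit_prod] at hpq
    exact ⟨F, ⟨hF, ⟨q, hpq.2⟩⟩, p, hpq.1⟩
  · intro h Y tY hHY a O hOopen hOne
    -- choose a basic box inside each O i
    have hbox : ∀ i, ∃ V : Set X, ∃ W : Set Y, IsOpen V ∧ IsOpen W ∧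
        V.Nonempty ∧ W.Nonempty ∧ V ×ˢ W ⊆ O i := by
      intro i
      obtain ⟨⟨x, y⟩, hxy⟩ := hOne i
      obtain ⟨V, W, hV, hW, hxV, hyW, hsub⟩ := (isOpen_prod_iff.mp (hOopen i)) x y hxy
      exact ⟨V, W, hV, hW, ⟨x, hxV⟩, ⟨y, hyW⟩, hsub⟩
    choose V W hVopen hWopen hVne hWne hsub using hbox
    have h𝓖 : pspec W ∈ pspecI (I a) H := ⟨Y, tY, W, hHY, hWopen, hWne, rfl⟩
    obtain ⟨F, ⟨hF𝓕, q, hq⟩, p, hp⟩ := h a (pspec W) h𝓖 V hVopen hVne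
    refine ⟨F, hF𝓕, (p, q), flimit_mono hsub ?_⟩
    exact flimit_prod.mpr ⟨hp, hq⟩
end

section
/- Let K be a class of topological spaces closed under homeomorphisms (if X ∈ K and Y is homeomorphic to X then Y ∈ K). Then 𝔉(𝔉(K)) = 𝔉(K), where 𝔉 is the Frolík operator relative to the topological product. -/
universe u

/-- The Frolík class of a class `K` of topological spaces, relative to the topological
product: `𝔉(K) = {X : X × Y ∈ K for every Y ∈ K}`. -/
def topFrolik (K : ∀ X : Type u, TopologicalSpace X → Prop) :
    ∀ X : Type u, TopologicalSpace X → Prop :=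
  fun X tX => ∀ (Y : Type u) (tY : TopologicalSpace Y), K Y tY →
    K (X × Y) (@instTopologicalSpaceProd X Y tX tY)

/-- If `K` is closed under homeomorphisms, then `𝔉(𝔉(K)) = 𝔉(K)`. -/
theorem topFrolik_idem (K : ∀ X : Type u, TopologicalSpace X → Prop)
    (hK : ∀ (X Y : Type u) (tX : TopologicalSpace X) (tY : TopologicalSpace Y),
      K X tX → Nonempty (@Homeomorph X Y tX tY) → K Y tY) :
    topFrolik (topFrolik K) = topFrolik K := by
  funext X tX
  apply propext
  letI := tX
  constructor
  · intro hX Z tZ hZ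
    letI := tZ
    have hpt : topFrolik K PUnit ⊥ := by
      intro W tW hW
      letI := tW
      exact hK W (PUnit × W) tW _ hW ⟨(Homeomorph.punitProd W).symm⟩
    have h2 := hX PUnit ⊥ hpt Z tZ hZ
    exact hK ((X × PUnit) × Z) (X × Z) _ _ h2
      ⟨(Homeomorph.prodPUnit X).prodCongr (Homeomorph.refl Z)⟩
  · intro hX Y tY hY Z tZ hZ
    letI := tY; letI := tZ
    have h1 := hY Z tZ hZ
    have h2 := hX (Y × Z) _ h1
    exact hK (X × (Y × Z)) ((X × Y) × Z) _ _ h2 ⟨(Homeomorph.prodAssoc X Y Z).symm⟩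
end

section
/- Let C be the class of all topological spaces with at least two points, with the Frolík operator 𝔉 taken relative to C and the topological product, and let K = {X ∈ C : |X| ∈ {2, 2^5} ∪ {2^{9+2h} : h ∈ ℕ}}. Then 𝔉(K) = {X ∈ C : |X| ∈ {2^4} ∪ {2^{8+2h} : h ∈ ℕ}}, 𝔉(𝔉(K)) = {X ∈ C : |X| ∈ {2^{4+2h} : h ∈ ℕ}}, and 𝔉(𝔉(𝔉(K))) = {X ∈ C : |X| ∈ {2^{2+2h} : h ∈ ℕ}}; in particular the inclusions 𝔉(K) ⊂ 𝔉(𝔉(K)) ⊂ 𝔉(𝔉(𝔉(K))) are strict. -/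
universe u

/-- The Frolík class relative to the class `C` of spaces with at least two points:
`𝔉(K) = {X ∈ C : X × Y ∈ K for every Y ∈ K}`. -/
def frolikC (K : ∀ X : Type u, TopologicalSpace X → Prop) :
    ∀ X : Type u, TopologicalSpace X → Prop :=
  fun X tX => Nontrivial X ∧ ∀ (Y : Type u) (tY : TopologicalSpace Y), K Y tY →
    K (X × Y) (@instTopologicalSpaceProd X Y tX tY)

/-- The class `K ⊆ C` of spaces whose cardinality lies in `{2, 2^5} ∪ {2^(9+2h) : h ∈ ℕ}`. -/
def K16 : ∀ X : Type u, TopologicalSpace X → Prop :=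
  fun X _ => Nontrivial X ∧
    Cardinal.mk X ∈ ({2, 2 ^ (5 : ℕ)} ∪ {c | ∃ h : ℕ, c = 2 ^ (9 + 2 * h)} :
      Set Cardinal.{u})

def KE (E : Set ℕ) : ∀ X : Type u, TopologicalSpace X → Prop :=
  fun X _ => Nontrivial X ∧ ∃ e ∈ E, Cardinal.mk X = 2 ^ e

lemma two_pow_cast (n : ℕ) : ((2 ^ n : ℕ) : Cardinal.{u}) = 2 ^ n := by push_cast; rfl

lemma cpow_inj {a b : ℕ} (h : (2 : Cardinal.{u}) ^ a = 2 ^ b) : a = b := by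
  have h2 : ((2 ^ a : ℕ) : Cardinal.{u}) = ((2 ^ b : ℕ) : Cardinal.{u}) := by
    rw [two_pow_cast, two_pow_cast, h]
  exact Nat.pow_right_injective le_rfl (Nat.cast_injective h2)

lemma mk_ulift_fin (n : ℕ) : Cardinal.mk (ULift.{u} (Fin n)) = n := by simp

lemma nontrivial_ulift_fin {n : ℕ} (h : 2 ≤ n) : Nontrivial (ULift.{u} (Fin n)) := by
  haveI : Nontrivial (Fin n) := Fin.nontrivial_iff_two_le.mpr h
  infer_instance

lemma frolik_KE (E : Set ℕ) (hE : ∀ e ∈ E, 1 ≤ e) {e0 : ℕ} (he0 : e0 ∈ E)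
    (X : Type u) (tX : TopologicalSpace X) :
    frolikC (KE E) X tX ↔
      (Nontrivial X ∧ ∃ k, (1 ≤ k ∧ ∀ e ∈ E, k + e ∈ E) ∧ Cardinal.mk X = 2 ^ k) := by
  constructor
  · rintro ⟨hnt, h⟩
    refine ⟨hnt, ?_⟩
    have key : ∀ e ∈ E, ∃ m ∈ E, Cardinal.mk X * 2 ^ e = 2 ^ m := by
      intro e he
      have h2e : 2 ≤ 2 ^ e := by
        calc (2:ℕ) = 2 ^ 1 := (pow_one 2).symm
        _ ≤ 2 ^ e := Nat.pow_le_pow_right (by norm_num) (hE e he)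
      have hY : KE E (ULift.{u} (Fin (2 ^ e))) ⊥ :=
        ⟨nontrivial_ulift_fin h2e, e, he, by rw [mk_ulift_fin, two_pow_cast]⟩
      obtain ⟨-, m, hm, hmk⟩ := h (ULift.{u} (Fin (2 ^ e))) ⊥ hY
      refine ⟨m, hm, ?_⟩
      rw [Cardinal.mk_prod, Cardinal.lift_id, Cardinal.lift_id, mk_ulift_fin,
        two_pow_cast] at hmk
      exact hmk
    obtain ⟨m, hm, hmk⟩ := key e0 he0
    -- X is finite
    have hfin : Cardinal.mk X < Cardinal.aleph0 := by
      have h1 : Cardinal.mk X ≤ Cardinal.mk X * 2 ^ e0 :=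
        le_mul_of_one_le_right zero_le (by
          calc (1:Cardinal) ≤ 2 := by norm_num
          _ = 2 ^ 1 := (pow_one 2).symm
          _ ≤ 2 ^ e0 := by
              exact pow_le_pow_right₀ (by norm_num) (hE e0 he0))
      rw [hmk] at h1
      refine h1.trans_lt ?_
      rw [← two_pow_cast]
      exact Cardinal.nat_lt_aleph0 _
    obtain ⟨n, hn⟩ := Cardinal.lt_aleph0.mp hfin
    have h2n : 2 ≤ n := by
      have : (1 : Cardinal) < Cardinal.mk X := Cardinal.one_lt_iff_nontrivial.mpr hnt
      rw [hn] at this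
      exact_mod_cast this
    -- n * 2^e0 = 2^m in ℕ
    have hnat : n * 2 ^ e0 = 2 ^ m := by
      have : ((n * 2 ^ e0 : ℕ) : Cardinal.{u}) = ((2 ^ m : ℕ) : Cardinal.{u}) := by
        rw [two_pow_cast]; push_cast; rw [← hn]
        rw [← two_pow_cast] at hmk
        push_cast at hmk ⊢
        exact hmk
      exact Nat.cast_injective this
    have hdvd : n ∣ 2 ^ m := ⟨2 ^ e0, hnat.symm⟩
    obtain ⟨k, hkm, hnk⟩ := (Nat.dvd_prime_pow Nat.prime_two).mp hdvd
    have hk1 : 1 ≤ k := by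
      rcases Nat.eq_zero_or_pos k with rfl | h
      · simp at hnk; omega
      · exact h
    refine ⟨k, ⟨hk1, ?_⟩, by rw [hn, hnk, two_pow_cast]⟩
    intro e he
    obtain ⟨m', hm', hmk'⟩ := key e he
    have : (2 : Cardinal.{u}) ^ (k + e) = 2 ^ m' := by
      rw [pow_add, ← hmk', hn, hnk, two_pow_cast]
    rw [cpow_inj this]
    exact hm'
  · rintro ⟨hnt, k, ⟨hk1, hclo⟩, hcard⟩
    refine ⟨hnt, ?_⟩
    rintro Y tY ⟨hYnt, e, he, hYcard⟩
    haveI := hnt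
    haveI := hYnt
    refine ⟨inferInstance, k + e, hclo e he, ?_⟩
    rw [Cardinal.mk_prod, Cardinal.lift_id, Cardinal.lift_id, hcard, hYcard, pow_add]

def E0 : Set ℕ := {e | e % 2 = 1 ∧ e ≠ 3 ∧ e ≠ 7}
def E1 : Set ℕ := {k | k % 2 = 0 ∧ 4 ≤ k ∧ k ≠ 6}
def E2 : Set ℕ := {k | k % 2 = 0 ∧ 4 ≤ k}
def E3 : Set ℕ := {k | k % 2 = 0 ∧ 2 ≤ k}

lemma step (E F : Set ℕ) (hE : ∀ e ∈ E, 1 ≤ e) (e0 : ℕ) (he0 : e0 ∈ E)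
    (hD : ∀ k, (1 ≤ k ∧ ∀ e ∈ E, k + e ∈ E) ↔ k ∈ F) :
    frolikC (KE E) = KE F := by
  funext X tX
  apply propext
  rw [frolik_KE E hE he0]
  simp only [KE, hD]


lemma d0 : ∀ k, (1 ≤ k ∧ ∀ e ∈ E0, k + e ∈ E0) ↔ k ∈ E1 := by
  intro k
  constructor
  · rintro ⟨h1, hc⟩
    have a := hc 1 (by simp [E0])
    have b := hc 5 (by simp [E0])
    have c := hc 9 (by simp [E0])
    simp only [E0, E1, Set.mem_setOf_eq] at a b c ⊢
    omega
  · intro hk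
    refine ⟨by simp only [E1, Set.mem_setOf_eq] at hk; omega, ?_⟩
    intro e he
    simp only [E0, E1, Set.mem_setOf_eq] at *
    omega

lemma d1 : ∀ k, (1 ≤ k ∧ ∀ e ∈ E1, k + e ∈ E1) ↔ k ∈ E2 := by
  intro k
  constructor
  · rintro ⟨h1, hc⟩
    have a := hc 4 (by simp [E1])
    simp only [E1, E2, Set.mem_setOf_eq] at a ⊢
    omega
  · intro hk
    refine ⟨by simp only [E2, Set.mem_setOf_eq] at hk; omega, ?_⟩
    intro e he
    simp only [E1, E2, Set.mem_setOf_eq] at *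
    omega

lemma d2 : ∀ k, (1 ≤ k ∧ ∀ e ∈ E2, k + e ∈ E2) ↔ k ∈ E3 := by
  intro k
  constructor
  · rintro ⟨h1, hc⟩
    have a := hc 4 (by simp [E2])
    simp only [E2, E3, Set.mem_setOf_eq] at a ⊢
    omega
  · intro hk
    refine ⟨by simp only [E3, Set.mem_setOf_eq] at hk; omega, ?_⟩
    intro e he
    simp only [E2, E3, Set.mem_setOf_eq] at *
    omega

lemma hE0 : ∀ e ∈ E0, 1 ≤ e := by intro e he; simp only [E0, Set.mem_setOf_eq] at he; omega
lemma hE1 : ∀ e ∈ E1, 1 ≤ e := by intro e he; simp only [E1, Set.mem_setOf_eq] at he; omega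
lemma hE2 : ∀ e ∈ E2, 1 ≤ e := by intro e he; simp only [E2, Set.mem_setOf_eq] at he; omega

lemma he0mem : (1 : ℕ) ∈ E0 := by simp [E0]
lemma he1mem : (4 : ℕ) ∈ E1 := by simp [E1]
lemma he2mem : (4 : ℕ) ∈ E2 := by simp [E2]


lemma K16_eq : K16.{u} = KE E0 := by
  funext X tX
  apply propext
  simp only [K16, KE, Set.mem_union, Set.mem_insert_iff, Set.mem_singleton_iff,
    Set.mem_setOf_eq]
  refine Iff.rfl.and ?_
  constructor
  · rintro ((h | h) | ⟨h, hh⟩)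
    · exact ⟨1, by simp [E0], by rw [h, pow_one]⟩
    · exact ⟨5, by simp [E0], h⟩
    · exact ⟨9 + 2 * h, by simp only [E0, Set.mem_setOf_eq]; omega, hh⟩
  · rintro ⟨e, he, hc⟩
    simp only [E0, Set.mem_setOf_eq] at he
    rcases eq_or_ne e 1 with rfl | h1
    · left; left; rw [hc, pow_one]
    rcases eq_or_ne e 5 with rfl | h5
    · left; right; exact hc
    · right; exact ⟨(e - 9) / 2, by rw [hc]; congr 1; omega⟩

lemma T1 (c : Cardinal.{u}) :
    (∃ e ∈ E1, c = 2 ^ e) ↔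
      c ∈ ({2 ^ (4 : ℕ)} ∪ {c | ∃ h : ℕ, c = 2 ^ (8 + 2 * h)} : Set Cardinal.{u}) := by
  simp only [Set.mem_union, Set.mem_singleton_iff, Set.mem_setOf_eq]
  constructor
  · rintro ⟨e, he, rfl⟩
    simp only [E1, Set.mem_setOf_eq] at he
    rcases eq_or_ne e 4 with rfl | h4
    · left; rfl
    · right; exact ⟨(e - 8) / 2, by congr 1; omega⟩
  · rintro (h | ⟨h, hh⟩)
    · exact ⟨4, by simp [E1], h⟩
    · exact ⟨8 + 2 * h, by simp only [E1, Set.mem_setOf_eq]; omega, hh⟩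

lemma T2 (c : Cardinal.{u}) :
    (∃ e ∈ E2, c = 2 ^ e) ↔ c ∈ ({c | ∃ h : ℕ, c = 2 ^ (4 + 2 * h)} : Set Cardinal.{u}) := by
  simp only [Set.mem_setOf_eq]
  constructor
  · rintro ⟨e, he, rfl⟩
    simp only [E2, Set.mem_setOf_eq] at he
    exact ⟨(e - 4) / 2, by congr 1; omega⟩
  · rintro ⟨h, hh⟩
    exact ⟨4 + 2 * h, by simp only [E2, Set.mem_setOf_eq]; omega, hh⟩

lemma T3 (c : Cardinal.{u}) :
    (∃ e ∈ E3, c = 2 ^ e) ↔ c ∈ ({c | ∃ h : ℕ, c = 2 ^ (2 + 2 * h)} : Set Cardinal.{u}) := by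
  simp only [Set.mem_setOf_eq]
  constructor
  · rintro ⟨e, he, rfl⟩
    simp only [E3, Set.mem_setOf_eq] at he
    exact ⟨(e - 2) / 2, by congr 1; omega⟩
  · rintro ⟨h, hh⟩
    exact ⟨2 + 2 * h, by simp only [E3, Set.mem_setOf_eq]; omega, hh⟩

lemma not_KE_of (F : Set ℕ) (n : ℕ) (hn : n ∉ F) (t : TopologicalSpace (ULift.{u} (Fin (2 ^ n)))) :
    ¬ KE F (ULift.{u} (Fin (2 ^ n))) t := by
  rintro ⟨-, e, he, hc⟩
  rw [mk_ulift_fin, two_pow_cast] at hc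
  exact hn (cpow_inj hc ▸ he)

lemma KE_of (F : Set ℕ) (n : ℕ) (hn : n ∈ F) (h2 : 1 ≤ n)
    (t : TopologicalSpace (ULift.{u} (Fin (2 ^ n)))) :
    KE F (ULift.{u} (Fin (2 ^ n))) t := by
  refine ⟨nontrivial_ulift_fin ?_, n, hn, by rw [mk_ulift_fin, two_pow_cast]⟩
  calc (2:ℕ) = 2 ^ 1 := (pow_one 2).symm
  _ ≤ 2 ^ n := Nat.pow_le_pow_right (by norm_num) h2


/-- Relative to the class of spaces with at least two points:
`𝔉(K16)`, `𝔉(𝔉(K16))` and `𝔉(𝔉(𝔉(K16)))` consist exactly of the spaces of cardinality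
in `{2^4} ∪ {2^(8+2h)}`, `{2^(4+2h)}` and `{2^(2+2h)}` respectively; in particular the
inclusions `𝔉(K16) ⊂ 𝔉(𝔉(K16)) ⊂ 𝔉(𝔉(𝔉(K16)))` are strict. -/
theorem frolikC_K16 :
    (∀ (X : Type u) (tX : TopologicalSpace X),
      frolikC K16 X tX ↔ (Nontrivial X ∧
        Cardinal.mk X ∈ ({2 ^ (4 : ℕ)} ∪ {c | ∃ h : ℕ, c = 2 ^ (8 + 2 * h)} :
          Set Cardinal.{u}))) ∧
    (∀ (X : Type u) (tX : TopologicalSpace X),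
      frolikC (frolikC K16) X tX ↔ (Nontrivial X ∧
        Cardinal.mk X ∈ ({c | ∃ h : ℕ, c = 2 ^ (4 + 2 * h)} : Set Cardinal.{u}))) ∧
    (∀ (X : Type u) (tX : TopologicalSpace X),
      frolikC (frolikC (frolikC K16)) X tX ↔ (Nontrivial X ∧
        Cardinal.mk X ∈ ({c | ∃ h : ℕ, c = 2 ^ (2 + 2 * h)} : Set Cardinal.{u}))) ∧
    ((∀ (X : Type u) (tX : TopologicalSpace X),
        frolikC K16 X tX → frolikC (frolikC K16) X tX) ∧
      ∃ (X : Type u) (tX : TopologicalSpace X),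
        frolikC (frolikC K16) X tX ∧ ¬ frolikC K16 X tX) ∧
    ((∀ (X : Type u) (tX : TopologicalSpace X),
        frolikC (frolikC K16) X tX → frolikC (frolikC (frolikC K16)) X tX) ∧
      ∃ (X : Type u) (tX : TopologicalSpace X),
        frolikC (frolikC (frolikC K16)) X tX ∧ ¬ frolikC (frolikC K16) X tX) := by
  have h1 : frolikC K16.{u} = KE E1 := by
    rw [K16_eq]; exact step E0 E1 hE0 1 he0mem d0
  have h2 : frolikC (frolikC K16.{u}) = KE E2 := by
    rw [h1]; exact step E1 E2 hE1 4 he1mem d1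
  have h3 : frolikC (frolikC (frolikC K16.{u})) = KE E3 := by
    rw [h2]; exact step E2 E3 hE2 4 he2mem d2
  refine ⟨?_, ?_, ?_, ⟨?_, ?_⟩, ⟨?_, ?_⟩⟩
  · intro X tX; rw [h1]; exact Iff.rfl.and (T1 _)
  · intro X tX; rw [h2]; exact Iff.rfl.and (T2 _)
  · intro X tX; rw [h3]; exact Iff.rfl.and (T3 _)
  · intro X tX
    rw [h1, step E1 E2 hE1 4 he1mem d1]
    rintro ⟨hnt, e, he, hc⟩
    refine ⟨hnt, e, ?_, hc⟩
    simp only [E1, E2, Set.mem_setOf_eq] at *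
    omega
  · refine ⟨ULift.{u} (Fin (2 ^ 6)), ⊥, ?_, ?_⟩
    · rw [h2]; exact KE_of E2 6 (by simp [E2]) (by norm_num) _
    · rw [h1]; exact not_KE_of E1 6 (by simp [E1]) _
  · intro X tX
    rw [h2, step E2 E3 hE2 4 he2mem d2]
    rintro ⟨hnt, e, he, hc⟩
    refine ⟨hnt, e, ?_, hc⟩
    simp only [E2, E3, Set.mem_setOf_eq] at *
    omega
  · refine ⟨ULift.{u} (Fin (2 ^ 2)), ⊥, ?_, ?_⟩
    · rw [h3]; exact KE_of E3 2 (by simp [E3]) (by norm_num) _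
    · rw [h2]; exact not_KE_of E2 2 (by simp [E2]) _
end
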